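/- arXiv:0806.0320 — 9 statements merged into one kernel-verified Lean document; each statement's English description precedes it below -/
import Mathlib

section
/- (H_λ is contained in the Gauss–Seidel feasible set) If h ∈ H_λ, i.e. h ≤ T_λ h componentwise, then h ∈ H^GS_λ, i.e. h ≤ T^GS_λ h componentwise. Hence H_λ ⊆ H^GS_λ. -/
/-- The Markovian operator `T_λ` of the λ-stochastic shortest path problem:
`(T_λ h)(i) = min_{a ∈ A(i)} ( r(i,a) − λ + Σ_j p(i,a,j)·h(j) )`. -/
noncomputable def Tlam {n : ℕ} (A : Fin n → Finset ℕ) (hA : ∀ i, (A i).Nonempty)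
    (r : Fin n → ℕ → ℝ) (p : Fin n → ℕ → Fin n → ℝ) (lam : ℝ)
    (h : Fin n → ℝ) (i : Fin n) : ℝ :=
  (A i).inf' (hA i) (fun a => r i a - lam + ∑ j, p i a j * h j)
/-- The Gauss–Seidel operator `T^GS_λ`, defined recursively in increasing order of
the state index:
`(T^GS_λ h)(i) = min_{a ∈ A(i)} ( r(i,a) − λ + Σ_{j<i} p(i,a,j)·(T^GS_λ h)(j) + Σ_{j≥i} p(i,a,j)·h(j) )`. -/
noncomputable def TGS {n : ℕ} (A : Fin n → Finset ℕ) (hA : ∀ i, (A i).Nonempty)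
    (r : Fin n → ℕ → ℝ) (p : Fin n → ℕ → Fin n → ℝ) (lam : ℝ)
    (h : Fin n → ℝ) : Fin n → ℝ
  | i =>
    (A i).inf' (hA i) (fun a =>
      r i a - lam
        + ∑ j ∈ (Finset.univ.filter (fun j : Fin n => j < i)).attach,
            p i a j.1 * TGS A hA r p lam h j.1
        + ∑ j ∈ Finset.univ.filter (fun j : Fin n => i ≤ j), p i a j * h j)
  termination_by i => i.1
  decreasing_by
    exact (Finset.mem_filter.mp j.2).2

/-- `H_λ` is contained in the Gauss–Seidel feasible set `H^GS_λ`: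
if `h ≤ T_λ h` componentwise, then `h ≤ T^GS_λ h` componentwise. -/
theorem Hlam_subset_HGS (n : ℕ) (hn : 1 ≤ n)
    (A : Fin n → Finset ℕ) (hA : ∀ i, (A i).Nonempty)
    (r : Fin n → ℕ → ℝ) (p : Fin n → ℕ → Fin n → ℝ)
    (hp0 : ∀ i, ∀ a ∈ A i, ∀ j, 0 ≤ p i a j)
    (hp1 : ∀ i, ∀ a ∈ A i, ∑ j, p i a j ≤ 1)
    (lam : ℝ) (h : Fin n → ℝ) (hh : ∀ i, h i ≤ Tlam A hA r p lam h i) :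
    ∀ i, h i ≤ TGS A hA r p lam h i := by
  have key : ∀ m : ℕ, ∀ i : Fin n, i.1 ≤ m → h i ≤ TGS A hA r p lam h i := by
    intro m
    induction m using Nat.strong_induction_on with
    | _ m IHm =>
    intro i him
    have IH : ∀ j : Fin n, j < i → h j ≤ TGS A hA r p lam h j := fun j hji =>
      IHm j.1 (lt_of_lt_of_le hji him) j le_rfl
    refine le_trans (hh i) ?_
    rw [TGS, Tlam]
    apply Finset.le_inf'
    intro a ha
    refine le_trans (Finset.inf'_le _ ha) ?_
    have hsplit : ∑ j, p i a j * h j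
        = ∑ j ∈ Finset.univ.filter (fun j : Fin n => j < i), p i a j * h j
          + ∑ j ∈ Finset.univ.filter (fun j : Fin n => i ≤ j), p i a j * h j := by
      rw [← Finset.sum_filter_add_sum_filter_not Finset.univ (fun j : Fin n => j < i)]
      simp [not_lt]
    rw [hsplit]
    have hattach : ∑ j ∈ (Finset.univ.filter (fun j : Fin n => j < i)).attach,
            p i a j.1 * TGS A hA r p lam h j.1
        = ∑ j ∈ Finset.univ.filter (fun j : Fin n => j < i),
            p i a j * TGS A hA r p lam h j := by
      rw [← Finset.sum_attach (Finset.univ.filter (fun j : Fin n => j < i))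
        (fun j => p i a j * TGS A hA r p lam h j)]
    rw [hattach]
    have hle : ∑ j ∈ Finset.univ.filter (fun j : Fin n => j < i), p i a j * h j
        ≤ ∑ j ∈ Finset.univ.filter (fun j : Fin n => j < i),
            p i a j * TGS A hA r p lam h j := by
      apply Finset.sum_le_sum
      intro j hj
      have hji : j < i := (Finset.mem_filter.mp hj).2
      exact mul_le_mul_of_nonneg_left (IH j hji) (hp0 i a ha j)
    linarith
  exact fun i => key i.1 i le_rfl
end

section
/- (The Gauss–Seidel operator maps its feasible set into H_λ) If h ∈ H^GS_λ, i.e. h ≤ T^GS_λ h componentwise, then the vector g = T^GS_λ h belongs to H_λ, i.e. g ≤ T_λ g componentwise. Hence T^GS_λ(H^GS_λ) ⊆ H_λ. -/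
/-- The Gauss–Seidel operator maps its feasible set into `H_λ`:
if `h ≤ T^GS_λ h` componentwise, then `g = T^GS_λ h` satisfies `g ≤ T_λ g`
componentwise. -/
theorem TGS_maps_HGS_into_Hlam (n : ℕ) (hn : 1 ≤ n)
    (A : Fin n → Finset ℕ) (hA : ∀ i, (A i).Nonempty)
    (r : Fin n → ℕ → ℝ) (p : Fin n → ℕ → Fin n → ℝ)
    (hp0 : ∀ i, ∀ a ∈ A i, ∀ j, 0 ≤ p i a j)
    (hp1 : ∀ i, ∀ a ∈ A i, ∑ j, p i a j ≤ 1)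
    (lam : ℝ) (h : Fin n → ℝ) (hh : ∀ i, h i ≤ TGS A hA r p lam h i) :
    ∀ i, TGS A hA r p lam h i ≤ Tlam A hA r p lam (TGS A hA r p lam h) i := by
  intro i
  rw [TGS, Tlam]
  refine Finset.le_inf' _ _ fun a ha => le_trans (Finset.inf'_le _ ha) ?_
  have hsum : ∑ j ∈ (Finset.univ.filter (fun j : Fin n => j < i)).attach,
      p i a j.1 * TGS A hA r p lam h j.1
      = ∑ j ∈ Finset.univ.filter (fun j : Fin n => j < i),
          p i a j * TGS A hA r p lam h j :=
    Finset.sum_attach _ fun j => p i a j * TGS A hA r p lam h j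
  rw [hsum]
  have hsplit : ∑ j, p i a j * TGS A hA r p lam h j
      = ∑ j ∈ Finset.univ.filter (fun j : Fin n => j < i),
          p i a j * TGS A hA r p lam h j
        + ∑ j ∈ Finset.univ.filter (fun j : Fin n => i ≤ j),
          p i a j * TGS A hA r p lam h j := by
    rw [← Finset.sum_filter_add_sum_filter_not Finset.univ (fun j : Fin n => j < i)]
    congr 1
    apply Finset.sum_congr _ (fun _ _ => rfl)
    ext j
    simp [not_lt]
  rw [hsplit]
  have hle : ∑ j ∈ Finset.univ.filter (fun j : Fin n => i ≤ j), p i a j * h j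
      ≤ ∑ j ∈ Finset.univ.filter (fun j : Fin n => i ≤ j),
          p i a j * TGS A hA r p lam h j :=
    Finset.sum_le_sum fun j _ => mul_le_mul_of_nonneg_left (hh j) (hp0 i a ha j)
  linarith
end

section
/- (Invariance of H_λ under the Gauss–Seidel operator) If h ∈ H_λ, i.e. h ≤ T_λ h componentwise, then T^GS_λ h ∈ H_λ, i.e. T^GS_λ h ≤ T_λ(T^GS_λ h) componentwise. Hence T^GS_λ(H_λ) ⊆ H_λ. -/
lemma TGS_eq {n : ℕ} (A : Fin n → Finset ℕ) (hA : ∀ i, (A i).Nonempty)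
    (r : Fin n → ℕ → ℝ) (p : Fin n → ℕ → Fin n → ℝ) (lam : ℝ)
    (h : Fin n → ℝ) (i : Fin n) :
    TGS A hA r p lam h i
      = (A i).inf' (hA i) (fun a =>
          r i a - lam
            + ∑ j ∈ Finset.univ.filter (fun j : Fin n => j < i),
                p i a j * TGS A hA r p lam h j
            + ∑ j ∈ Finset.univ.filter (fun j : Fin n => i ≤ j), p i a j * h j) := by
  rw [TGS]
  congr 1
  funext a
  congr 1
  congr 1
  exact Finset.sum_attach _ (fun j => p i a j * TGS A hA r p lam h j)

lemma split_sum {n : ℕ} (i : Fin n) (f : Fin n → ℝ) :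
    ∑ j, f j = ∑ j ∈ Finset.univ.filter (fun j : Fin n => j < i), f j
      + ∑ j ∈ Finset.univ.filter (fun j : Fin n => i ≤ j), f j := by
  rw [← Finset.sum_filter_add_sum_filter_not Finset.univ (fun j : Fin n => j < i) f]
  congr 1
  apply Finset.sum_congr _ (fun _ _ => rfl)
  apply Finset.filter_congr
  intro j _
  simp [not_lt]

lemma h_le_TGS {n : ℕ}
    (A : Fin n → Finset ℕ) (hA : ∀ i, (A i).Nonempty)
    (r : Fin n → ℕ → ℝ) (p : Fin n → ℕ → Fin n → ℝ)
    (hp0 : ∀ i, ∀ a ∈ A i, ∀ j, 0 ≤ p i a j)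
    (lam : ℝ) (h : Fin n → ℝ) (hh : ∀ i, h i ≤ Tlam A hA r p lam h i) :
    ∀ i, h i ≤ TGS A hA r p lam h i := by
  suffices H : ∀ k, ∀ i : Fin n, i.1 < k → h i ≤ TGS A hA r p lam h i by
    intro i; exact H (i.1 + 1) i (Nat.lt_succ_self _)
  intro k
  induction k with
  | zero => intro i hi; omega
  | succ k ihk =>
    intro i hik
    have ih : ∀ j : Fin n, j < i → h j ≤ TGS A hA r p lam h j := by
      intro j hji
      exact ihk j (by omega)
    refine (hh i).trans ?_
    rw [TGS_eq]
    apply Finset.le_inf'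
    intro a ha
    refine (Finset.inf'_le _ ha).trans ?_
    rw [split_sum i (fun j => p i a j * h j)]
    have : ∑ j ∈ Finset.univ.filter (fun j : Fin n => j < i), p i a j * h j
        ≤ ∑ j ∈ Finset.univ.filter (fun j : Fin n => j < i),
            p i a j * TGS A hA r p lam h j := by
      apply Finset.sum_le_sum
      intro j hj
      have hji : j < i := (Finset.mem_filter.mp hj).2
      exact mul_le_mul_of_nonneg_left (ih j hji) (hp0 i a ha j)
    linarith

/-- Invariance of `H_λ` under the Gauss–Seidel operator:
if `h ≤ T_λ h` componentwise, then `T^GS_λ h ≤ T_λ (T^GS_λ h)` componentwise. -/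
theorem Hlam_invariant_under_TGS (n : ℕ) (hn : 1 ≤ n)
    (A : Fin n → Finset ℕ) (hA : ∀ i, (A i).Nonempty)
    (r : Fin n → ℕ → ℝ) (p : Fin n → ℕ → Fin n → ℝ)
    (hp0 : ∀ i, ∀ a ∈ A i, ∀ j, 0 ≤ p i a j)
    (hp1 : ∀ i, ∀ a ∈ A i, ∑ j, p i a j ≤ 1)
    (lam : ℝ) (h : Fin n → ℝ) (hh : ∀ i, h i ≤ Tlam A hA r p lam h i) :
    ∀ i, TGS A hA r p lam h i ≤ Tlam A hA r p lam (TGS A hA r p lam h) i := by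
  intro i
  set g := TGS A hA r p lam h with hg
  apply Finset.le_inf'
  intro a ha
  rw [hg, TGS_eq]
  refine (Finset.inf'_le _ ha).trans ?_
  rw [split_sum i (fun j => p i a j * g j)]
  have : ∑ j ∈ Finset.univ.filter (fun j : Fin n => i ≤ j), p i a j * h j
      ≤ ∑ j ∈ Finset.univ.filter (fun j : Fin n => i ≤ j), p i a j * g j := by
    apply Finset.sum_le_sum
    intro j _
    exact mul_le_mul_of_nonneg_left (h_le_TGS A hA r p hp0 lam h hh j) (hp0 i a ha j)
  linarith
end

section
/- (Invariance of the Gauss–Seidel feasible set under the Gauss–Seidel operator) If h ∈ H^GS_λ, i.e. h ≤ T^GS_λ h componentwise, then T^GS_λ h ∈ H^GS_λ, i.e. T^GS_λ h ≤ T^GS_λ(T^GS_λ h) componentwise. Hence T^GS_λ(H^GS_λ) ⊆ H^GS_λ. -/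
/-- Invariance of the Gauss–Seidel feasible set `H^GS_λ` under `T^GS_λ`:
if `h ≤ T^GS_λ h` componentwise, then `T^GS_λ h ≤ T^GS_λ (T^GS_λ h)`
componentwise. -/
theorem HGS_invariant_under_TGS (n : ℕ) (hn : 1 ≤ n)
    (A : Fin n → Finset ℕ) (hA : ∀ i, (A i).Nonempty)
    (r : Fin n → ℕ → ℝ) (p : Fin n → ℕ → Fin n → ℝ)
    (hp0 : ∀ i, ∀ a ∈ A i, ∀ j, 0 ≤ p i a j)
    (hp1 : ∀ i, ∀ a ∈ A i, ∑ j, p i a j ≤ 1)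
    (lam : ℝ) (h : Fin n → ℝ) (hh : ∀ i, h i ≤ TGS A hA r p lam h i) :
    ∀ i, TGS A hA r p lam h i ≤ TGS A hA r p lam (TGS A hA r p lam h) i := by
  suffices H : ∀ k (i : Fin n), i.1 < k →
      TGS A hA r p lam h i ≤ TGS A hA r p lam (TGS A hA r p lam h) i by
    exact fun i => H (i.1 + 1) i (Nat.lt_succ_self _)
  intro k
  induction k with
  | zero => exact fun i hi => absurd hi (Nat.not_lt_zero _)
  | succ k IHk =>
    intro i hi
    have IH : ∀ j : Fin n, j < i →
        TGS A hA r p lam h j ≤ TGS A hA r p lam (TGS A hA r p lam h) j :=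
      fun j hj => IHk j (by have := (Fin.lt_def.mp hj); omega)
    set g := TGS A hA r p lam h with hg
    rw [TGS.eq_def]
    conv_lhs => rw [hg, TGS.eq_def]
    dsimp only
    obtain ⟨a, ha, haeq⟩ := Finset.exists_mem_eq_inf' (hA i)
      (fun a => r i a - lam
        + ∑ j ∈ (Finset.univ.filter (fun j : Fin n => j < i)).attach,
            p i a j.1 * TGS A hA r p lam g j.1
        + ∑ j ∈ Finset.univ.filter (fun j : Fin n => i ≤ j), p i a j * g j)
    rw [haeq]
    refine le_trans (Finset.inf'_le _ ha) ?_
    refine add_le_add (add_le_add le_rfl ?_) ?_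
    · exact Finset.sum_le_sum fun j _ =>
        mul_le_mul_of_nonneg_left (IH j.1 (Finset.mem_filter.mp j.2).2) (hp0 i a ha j.1)
    · exact Finset.sum_le_sum fun j _ =>
        mul_le_mul_of_nonneg_left (hh j) (hp0 i a ha j)
end

section
/- (Projective Operator satisfies Acceleration Conditions (A) and (B)) Suppose there exists at least one pair (i, a) with a ∈ A(i) and Σ_j p(i,a,j) < 1. Let h ∈ H_λ and define α* = min over all pairs (i, a) with a ∈ A(i) and Σ_j p(i,a,j) < 1 of ( r(i,a) − λ − h(i) + Σ_j p(i,a,j)·h(j) ) / ( 1 − Σ_j p(i,a,j) ). Then α* ≥ 0, the vector h + α*·e (where e = (1,…,1)) belongs to H_λ, and h + α*·e ≥ h componentwise. -/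
open scoped Classical

set_option maxHeartbeats 1000000

/-- The Projective Operator satisfies Acceleration Conditions (A) and (B).
Suppose there is at least one pair `(i, a)` with `a ∈ A i` and `Σ_j p(i,a,j) < 1`,
and let `α*` be the minimum over all such pairs of
`(r(i,a) − λ − h(i) + Σ_j p(i,a,j)·h(j)) / (1 − Σ_j p(i,a,j))`.
Then for `h ∈ H_λ` we have `α* ≥ 0`, `h + α*·e ∈ H_λ`, and `h + α*·e ≥ h`. -/
theorem projective_operator_acceleration (n : ℕ) (hn : 1 ≤ n)
    (A : Fin n → Finset ℕ) (hA : ∀ i, (A i).Nonempty)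
    (r : Fin n → ℕ → ℝ) (p : Fin n → ℕ → Fin n → ℝ)
    (hp0 : ∀ i, ∀ a ∈ A i, ∀ j, 0 ≤ p i a j)
    (hp1 : ∀ i, ∀ a ∈ A i, ∑ j, p i a j ≤ 1)
    (lam : ℝ) (h : Fin n → ℝ) (hh : ∀ i, h i ≤ Tlam A hA r p lam h i)
    (hne : (((Finset.univ : Finset (Fin n)).sigma A).filter
        (fun x => ∑ j, p x.1 x.2 j < 1)).Nonempty)
    (αstar : ℝ)
    (hαstar : αstar = (((Finset.univ : Finset (Fin n)).sigma A).filter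
        (fun x => ∑ j, p x.1 x.2 j < 1)).inf' hne
        (fun x => (r x.1 x.2 - lam - h x.1 + ∑ j, p x.1 x.2 j * h j)
          / (1 - ∑ j, p x.1 x.2 j))) :
    0 ≤ αstar ∧
      (∀ i, h i + αstar ≤ Tlam A hA r p lam (fun j => h j + αstar) i) ∧
      (∀ i, h i + αstar ≥ h i) := by
  -- basic fact: for each i and a ∈ A i, h i ≤ r i a - lam + Σ p h
  have key : ∀ i, ∀ a ∈ A i, h i ≤ r i a - lam + ∑ j, p i a j * h j := by
    intro i a ha
    exact (hh i).trans (Finset.inf'_le _ ha)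
  have hα0 : 0 ≤ αstar := by
    rw [hαstar]
    apply Finset.le_inf'
    intro x hx
    rw [Finset.mem_filter, Finset.mem_sigma] at hx
    apply div_nonneg
    · have := key x.1 x.2 hx.1.2
      linarith
    · linarith [hx.2]
  refine ⟨hα0, ?_, fun i => by linarith⟩
  intro i
  unfold Tlam
  apply Finset.le_inf'
  intro a ha
  have hsum : ∑ j, p i a j * (h j + αstar)
      = (∑ j, p i a j * h j) + (∑ j, p i a j) * αstar := by
    rw [Finset.sum_mul]
    rw [← Finset.sum_add_distrib]
    congr 1; ext j; ring
  simp only [hsum]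
  by_cases hlt : ∑ j, p i a j < 1
  · have hmem : (⟨i, a⟩ : Σ _ : Fin n, ℕ) ∈
        (((Finset.univ : Finset (Fin n)).sigma A).filter
          (fun x => ∑ j, p x.1 x.2 j < 1)) := by
      rw [Finset.mem_filter, Finset.mem_sigma]
      exact ⟨⟨Finset.mem_univ _, ha⟩, hlt⟩
    have hle : αstar ≤ (r i a - lam - h i + ∑ j, p i a j * h j)
        / (1 - ∑ j, p i a j) := by
      rw [hαstar]; exact Finset.inf'_le _ hmem
    rw [le_div_iff₀ (by linarith)] at hle
    nlinarith
  · have heq : ∑ j, p i a j = 1 := le_antisymm (hp1 i a ha) (not_lt.mp hlt)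
    have := key i a ha
    rw [heq]
    linarith
end

section
/- (Elements of V are dominated by the fixed point) Suppose v* ∈ ℝ^n satisfies T v* = v*. Then every v ∈ V, i.e. every v with v ≤ T v componentwise, satisfies v ≤ v* componentwise. -/
/-- The Markovian operator of the discounted MDP:
`(T v)(i) = min_{a ∈ A(i)} ( r(i,a) + α·Σ_j p(i,a,j)·v(j) )`. -/
noncomputable def Tdisc {n : ℕ} (A : Fin n → Finset ℕ) (hA : ∀ i, (A i).Nonempty)
    (r : Fin n → ℕ → ℝ) (p : Fin n → ℕ → Fin n → ℝ) (disc : ℝ)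
    (v : Fin n → ℝ) (i : Fin n) : ℝ :=
  (A i).inf' (hA i) (fun a => r i a + disc * ∑ j, p i a j * v j)

/-- Elements of `V = {v : v ≤ T v}` are dominated by the fixed point of the
discounted operator `T`: if `T v* = v*` and `v ≤ T v` componentwise, then
`v ≤ v*` componentwise. -/
theorem feasible_le_fixedPoint (n : ℕ) (hn : 1 ≤ n)
    (disc : ℝ) (hdisc0 : 0 ≤ disc) (hdisc1 : disc < 1)
    (A : Fin n → Finset ℕ) (hA : ∀ i, (A i).Nonempty)
    (r : Fin n → ℕ → ℝ) (p : Fin n → ℕ → Fin n → ℝ)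
    (hp0 : ∀ i, ∀ a ∈ A i, ∀ j, 0 ≤ p i a j)
    (hp1 : ∀ i, ∀ a ∈ A i, ∑ j, p i a j = 1)
    (vstar : Fin n → ℝ) (hfix : Tdisc A hA r p disc vstar = vstar)
    (v : Fin n → ℝ) (hv : ∀ i, v i ≤ Tdisc A hA r p disc v i) :
    ∀ i, v i ≤ vstar i := by
  obtain ⟨i0, -, hmax⟩ := Finset.exists_max_image Finset.univ (fun i => v i - vstar i)
    ⟨⟨0, by omega⟩, Finset.mem_univ _⟩
  set M := v i0 - vstar i0 with hM
  have hmax' : ∀ i, v i - vstar i ≤ M := fun i => hmax i (Finset.mem_univ i)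
  -- pick the minimizing action for vstar at i0
  obtain ⟨a, ha, hEa⟩ := Finset.exists_mem_eq_inf' (hA i0)
    (fun a => r i0 a + disc * ∑ j, p i0 a j * vstar j)
  have hvstar : vstar i0 = r i0 a + disc * ∑ j, p i0 a j * vstar j := by
    conv_lhs => rw [← hfix]
    exact hEa
  have hvle : v i0 ≤ r i0 a + disc * ∑ j, p i0 a j * v j :=
    (hv i0).trans (Finset.inf'_le _ ha)
  have hsum : ∑ j, p i0 a j * v j - ∑ j, p i0 a j * vstar j ≤ M := by
    rw [← Finset.sum_sub_distrib]
    calc ∑ j, (p i0 a j * v j - p i0 a j * vstar j)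
        ≤ ∑ j : Fin n, p i0 a j * M := by
          apply Finset.sum_le_sum
          intro j _
          rw [← mul_sub]
          exact mul_le_mul_of_nonneg_left (hmax' j) (hp0 i0 a ha j)
      _ = M := by rw [← Finset.sum_mul, hp1 i0 a ha, one_mul]
  have hMle : M ≤ disc * M := by
    have := hvle
    rw [hvstar] at hM
    nlinarith [hsum]
  have hM0 : M ≤ 0 := by nlinarith
  intro i
  have := hmax' i
  linarith
end

section
/- (Sandwich property of accelerated value iteration, Remark (i)) Let Z : ℝ^n → ℝ^n satisfy (A) Z(V) ⊆ V and (B) Z v ≥ v componentwise for all v ∈ V. Suppose v* ∈ ℝ^n satisfies T v* = v*. Let v^0 = w^0 ∈ V and define v^{k+1} = T v^k and w^{k+1} = Z(T w^k) for k ≥ 0. Then for every k ≥ 0: v^k ≤ w^k ≤ v* componentwise. -/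
lemma Tdisc_mono {n : ℕ} (A : Fin n → Finset ℕ) (hA : ∀ i, (A i).Nonempty)
    (r : Fin n → ℕ → ℝ) (p : Fin n → ℕ → Fin n → ℝ) (disc : ℝ) (hdisc0 : 0 ≤ disc)
    (hp0 : ∀ i, ∀ a ∈ A i, ∀ j, 0 ≤ p i a j)
    (u v : Fin n → ℝ) (huv : ∀ j, u j ≤ v j) (i : Fin n) :
    Tdisc A hA r p disc u i ≤ Tdisc A hA r p disc v i := by
  apply Finset.le_inf'
  intro a ha
  refine le_trans (Finset.inf'_le _ ha) ?_
  have : ∑ j, p i a j * u j ≤ ∑ j, p i a j * v j :=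
    Finset.sum_le_sum fun j _ =>
      mul_le_mul_of_nonneg_left (huv j) (hp0 i a ha j)
  have := mul_le_mul_of_nonneg_left this hdisc0
  linarith

/-- Any element of `V` is below the fixed point. -/
lemma le_vstar {n : ℕ} (hn : 1 ≤ n)
    (disc : ℝ) (hdisc0 : 0 ≤ disc) (hdisc1 : disc < 1)
    (A : Fin n → Finset ℕ) (hA : ∀ i, (A i).Nonempty)
    (r : Fin n → ℕ → ℝ) (p : Fin n → ℕ → Fin n → ℝ)
    (hp0 : ∀ i, ∀ a ∈ A i, ∀ j, 0 ≤ p i a j)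
    (hp1 : ∀ i, ∀ a ∈ A i, ∑ j, p i a j = 1)
    (vstar : Fin n → ℝ) (hfix : Tdisc A hA r p disc vstar = vstar)
    (u : Fin n → ℝ) (hu : ∀ i, u i ≤ Tdisc A hA r p disc u i) :
    ∀ i, u i ≤ vstar i := by
  have hne : (Finset.univ : Finset (Fin n)).Nonempty := by
    have : 0 < n := hn
    exact ⟨⟨0, this⟩, Finset.mem_univ _⟩
  set M := Finset.univ.sup' hne (fun i => u i - vstar i) with hM
  have hbound : ∀ i, u i - vstar i ≤ disc * M := by
    intro i
    obtain ⟨a, ha, hamin⟩ := Finset.exists_mem_eq_inf' (hA i)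
        (fun a => r i a + disc * ∑ j, p i a j * vstar j)
    have h1 : Tdisc A hA r p disc u i ≤ r i a + disc * ∑ j, p i a j * u j :=
      Finset.inf'_le _ ha
    have h2 : vstar i = r i a + disc * ∑ j, p i a j * vstar j :=
      (congrFun hfix i).symm.trans hamin
    have h3 : ∑ j, p i a j * u j - ∑ j, p i a j * vstar j ≤ M := by
      rw [← Finset.sum_sub_distrib]
      calc ∑ j, (p i a j * u j - p i a j * vstar j)
          = ∑ j, p i a j * (u j - vstar j) := by
            apply Finset.sum_congr rfl; intro j _; ring
        _ ≤ ∑ j, p i a j * M := by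
            apply Finset.sum_le_sum
            intro j _
            have hj := Finset.le_sup' (fun i => u i - vstar i)
              (Finset.mem_univ j)
            rw [← hM] at hj
            exact mul_le_mul_of_nonneg_left hj (hp0 i a ha j)
        _ = M := by rw [← Finset.sum_mul, hp1 i a ha, one_mul]
    calc u i - vstar i ≤ Tdisc A hA r p disc u i - vstar i := by
          linarith [hu i]
      _ ≤ (r i a + disc * ∑ j, p i a j * u j)
            - (r i a + disc * ∑ j, p i a j * vstar j) := by
          rw [h2] at *; linarith
      _ = disc * (∑ j, p i a j * u j - ∑ j, p i a j * vstar j) := by ring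
      _ ≤ disc * M := mul_le_mul_of_nonneg_left h3 hdisc0
  have hMle : M ≤ disc * M := by
    rw [hM]
    apply Finset.sup'_le
    intro i _
    exact hbound i
  have hM0 : M ≤ 0 := by nlinarith
  intro i
  have := Finset.le_sup' (fun i => u i - vstar i) (Finset.mem_univ i)
  rw [← hM] at this
  linarith

/-- Sandwich property of accelerated value iteration (Remark, part (i)):
if `Z` satisfies the Acceleration Conditions (A) `Z(V) ⊆ V` and (B) `Z v ≥ v` on
`V = {v : v ≤ T v}`, `T v* = v*`, `v⁰ = w⁰ ∈ V`, `v^{k+1} = T v^k` and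
`w^{k+1} = Z (T w^k)`, then `v^k ≤ w^k ≤ v*` componentwise for every `k`. -/
theorem accelerated_VI_sandwich (n : ℕ) (hn : 1 ≤ n)
    (disc : ℝ) (hdisc0 : 0 ≤ disc) (hdisc1 : disc < 1)
    (A : Fin n → Finset ℕ) (hA : ∀ i, (A i).Nonempty)
    (r : Fin n → ℕ → ℝ) (p : Fin n → ℕ → Fin n → ℝ)
    (hp0 : ∀ i, ∀ a ∈ A i, ∀ j, 0 ≤ p i a j)
    (hp1 : ∀ i, ∀ a ∈ A i, ∑ j, p i a j = 1)
    (Z : (Fin n → ℝ) → (Fin n → ℝ))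
    (hZA : ∀ v : Fin n → ℝ, (∀ i, v i ≤ Tdisc A hA r p disc v i) →
      ∀ i, Z v i ≤ Tdisc A hA r p disc (Z v) i)
    (hZB : ∀ v : Fin n → ℝ, (∀ i, v i ≤ Tdisc A hA r p disc v i) →
      ∀ i, v i ≤ Z v i)
    (vstar : Fin n → ℝ) (hfix : Tdisc A hA r p disc vstar = vstar)
    (v w : ℕ → Fin n → ℝ)
    (h0 : v 0 = w 0) (h0V : ∀ i, v 0 i ≤ Tdisc A hA r p disc (v 0) i)
    (hv : ∀ k, v (k + 1) = Tdisc A hA r p disc (v k))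
    (hw : ∀ k, w (k + 1) = Z (Tdisc A hA r p disc (w k))) :
    ∀ k, ∀ i, v k i ≤ w k i ∧ w k i ≤ vstar i := by
  have key : ∀ k, (∀ i, v k i ≤ w k i) ∧
      (∀ i, w k i ≤ Tdisc A hA r p disc (w k) i) := by
    intro k
    induction k with
    | zero =>
      constructor
      · intro i; rw [h0]
      · intro i; rw [← h0]; exact h0V i
    | succ k ih =>
      obtain ⟨hvw, hwV⟩ := ih
      have hTwV : ∀ i, Tdisc A hA r p disc (w k) i ≤
          Tdisc A hA r p disc (Tdisc A hA r p disc (w k)) i :=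
        Tdisc_mono A hA r p disc hdisc0 hp0 _ _ hwV
      constructor
      · intro i
        rw [hv, hw]
        exact le_trans (Tdisc_mono A hA r p disc hdisc0 hp0 _ _ hvw i)
          (hZB _ hTwV i)
      · intro i
        rw [hw]
        exact hZA _ hTwV i
  intro k i
  obtain ⟨hvw, hwV⟩ := key k
  exact ⟨hvw i, le_vstar hn disc hdisc0 hdisc1 A hA r p hp0 hp1 vstar hfix
    (w k) hwV i⟩
end

section
/- (Geometric rate of convergence of the accelerated iterates, Remark (iv)) Let Z : ℝ^n → ℝ^n satisfy (A) Z(V) ⊆ V and (B) Z v ≥ v componentwise for all v ∈ V. Suppose v* ∈ ℝ^n satisfies T v* = v*. Let v^0 = w^0 ∈ V and define v^{k+1} = T v^k and w^{k+1} = Z(T w^k) for k ≥ 0. Then for every k ≥ 0: ‖v* − w^k‖_∞ ≤ α^k · ‖v* − v^0‖_∞, where ‖·‖_∞ denotes the max norm on ℝ^n; in particular w^k converges to v*. -/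
lemma Tdisc_le_add {n : ℕ} (A : Fin n → Finset ℕ) (hA : ∀ i, (A i).Nonempty)
    (r : Fin n → ℕ → ℝ) (p : Fin n → ℕ → Fin n → ℝ) (disc : ℝ) (hd : 0 ≤ disc)
    (hp0 : ∀ i, ∀ a ∈ A i, ∀ j, 0 ≤ p i a j)
    (hp1 : ∀ i, ∀ a ∈ A i, ∑ j, p i a j = 1)
    (u v : Fin n → ℝ) (c : ℝ) (huv : ∀ j, u j ≤ v j + c) (i : Fin n) :
    Tdisc A hA r p disc u i ≤ Tdisc A hA r p disc v i + disc * c := by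
  obtain ⟨a, ha, hav⟩ := Finset.exists_mem_eq_inf' (hA i)
    (fun a => r i a + disc * ∑ j, p i a j * v j)
  have h1 : Tdisc A hA r p disc u i ≤ r i a + disc * ∑ j, p i a j * u j :=
    Finset.inf'_le _ ha
  have h2 : ∑ j, p i a j * u j ≤ (∑ j, p i a j * v j) + c := by
    have hs : ∑ j, p i a j * u j ≤ ∑ j, (p i a j * v j + p i a j * c) := by
      apply Finset.sum_le_sum
      intro j _
      have h0 := hp0 i a ha j
      nlinarith [huv j]
    have := hp1 i a ha
    rw [Finset.sum_add_distrib, ← Finset.sum_mul, this, one_mul] at hs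
    exact hs
  have h3 : Tdisc A hA r p disc v i = r i a + disc * ∑ j, p i a j * v j := hav
  nlinarith

lemma le_vstar_of_mem_V {n : ℕ} (A : Fin n → Finset ℕ) (hA : ∀ i, (A i).Nonempty)
    (r : Fin n → ℕ → ℝ) (p : Fin n → ℕ → Fin n → ℝ) (disc : ℝ)
    (hd0 : 0 ≤ disc) (hd1 : disc < 1)
    (hp0 : ∀ i, ∀ a ∈ A i, ∀ j, 0 ≤ p i a j)
    (hp1 : ∀ i, ∀ a ∈ A i, ∑ j, p i a j = 1)
    (vstar : Fin n → ℝ) (hfix : Tdisc A hA r p disc vstar = vstar)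
    (u : Fin n → ℝ) (hu : ∀ i, u i ≤ Tdisc A hA r p disc u i) (i : Fin n) :
    u i ≤ vstar i := by
  set T : (Fin n → ℝ) → (Fin n → ℝ) := fun x => Tdisc A hA r p disc x with hT
  set C : ℝ := ‖u - vstar‖ with hC
  set s : ℕ → (Fin n → ℝ) := fun k => T^[k] u with hs
  have hsucc : ∀ k, s (k + 1) = T (s k) := by
    intro k
    simp [hs, Function.iterate_succ_apply']
  -- monotone iterates
  have hmono : ∀ k j, s k j ≤ s (k + 1) j := by
    intro k
    induction k with
    | zero => intro j; simpa [hs] using hu j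
    | succ m ih =>
      intro j
      rw [hsucc, hsucc]
      have := Tdisc_le_add A hA r p disc hd0 hp0 hp1 (s m) (s (m+1)) 0
        (fun j => by simpa using ih j) j
      simpa using this
  have hle : ∀ k j, u j ≤ s k j := by
    intro k
    induction k with
    | zero => intro j; simp [hs]
    | succ m ih => intro j; exact le_trans (ih j) (hmono m j)
  -- geometric bound
  have hbound : ∀ k j, s k j ≤ vstar j + disc ^ k * C := by
    intro k
    induction k with
    | zero =>
      intro j
      have : u j - vstar j ≤ C := by
        calc u j - vstar j ≤ |u j - vstar j| := le_abs_self _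
          _ = ‖(u - vstar) j‖ := by simp [Real.norm_eq_abs]
          _ ≤ ‖u - vstar‖ := norm_le_pi_norm _ j
      simp [hs]; linarith
    | succ m ih =>
      intro j
      have h := Tdisc_le_add A hA r p disc hd0 hp0 hp1 (s m) vstar (disc ^ m * C) ih j
      rw [hsucc]
      have hfj : Tdisc A hA r p disc vstar j = vstar j := by rw [hfix]
      calc T (s m) j ≤ Tdisc A hA r p disc vstar j + disc * (disc ^ m * C) := h
        _ = vstar j + disc ^ (m + 1) * C := by rw [hfj]; ring
  have hCle : ∀ k, u i - vstar i ≤ disc ^ k * C := fun k => by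
    have := le_trans (hle k i) (hbound k i); linarith
  have htend : Filter.Tendsto (fun k => disc ^ k * C) Filter.atTop (nhds 0) := by
    simpa using (tendsto_pow_atTop_nhds_zero_of_lt_one hd0 hd1).mul_const C
  have : u i - vstar i ≤ 0 := ge_of_tendsto' htend hCle
  linarith

/-- Geometric rate of convergence of the accelerated iterates (Remark, part (iv)):
under the Acceleration Conditions, `‖v* − w^k‖_∞ ≤ α^k·‖v* − v⁰‖_∞` for every `k`
(the norm on `Fin n → ℝ` is the sup/max norm); in particular `w^k → v*`. -/
theorem accelerated_VI_geometric_rate (n : ℕ) (hn : 1 ≤ n)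
    (disc : ℝ) (hdisc0 : 0 ≤ disc) (hdisc1 : disc < 1)
    (A : Fin n → Finset ℕ) (hA : ∀ i, (A i).Nonempty)
    (r : Fin n → ℕ → ℝ) (p : Fin n → ℕ → Fin n → ℝ)
    (hp0 : ∀ i, ∀ a ∈ A i, ∀ j, 0 ≤ p i a j)
    (hp1 : ∀ i, ∀ a ∈ A i, ∑ j, p i a j = 1)
    (Z : (Fin n → ℝ) → (Fin n → ℝ))
    (hZA : ∀ v : Fin n → ℝ, (∀ i, v i ≤ Tdisc A hA r p disc v i) →
      ∀ i, Z v i ≤ Tdisc A hA r p disc (Z v) i)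
    (hZB : ∀ v : Fin n → ℝ, (∀ i, v i ≤ Tdisc A hA r p disc v i) →
      ∀ i, v i ≤ Z v i)
    (vstar : Fin n → ℝ) (hfix : Tdisc A hA r p disc vstar = vstar)
    (v w : ℕ → Fin n → ℝ)
    (h0 : v 0 = w 0) (h0V : ∀ i, v 0 i ≤ Tdisc A hA r p disc (v 0) i)
    (hv : ∀ k, v (k + 1) = Tdisc A hA r p disc (v k))
    (hw : ∀ k, w (k + 1) = Z (Tdisc A hA r p disc (w k))) :
    (∀ k, ‖vstar - w k‖ ≤ disc ^ k * ‖vstar - v 0‖) ∧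
      Filter.Tendsto w Filter.atTop (nhds vstar) := by
  set C : ℝ := ‖vstar - v 0‖ with hC
  have hC0 : 0 ≤ C := norm_nonneg _
  -- simultaneous induction: w k ∈ V and v k ≤ w k
  have key : ∀ k, (∀ i, w k i ≤ Tdisc A hA r p disc (w k) i) ∧ (∀ i, v k i ≤ w k i) := by
    intro k
    induction k with
    | zero => exact ⟨h0 ▸ h0V, fun i => le_of_eq (congrFun h0 i)⟩
    | succ m ih =>
      obtain ⟨hwV, hvw⟩ := ih
      have hTwV : ∀ i, Tdisc A hA r p disc (w m) i ≤
          Tdisc A hA r p disc (Tdisc A hA r p disc (w m)) i := by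
        intro i
        have := Tdisc_le_add A hA r p disc hdisc0 hp0 hp1 (w m)
          (Tdisc A hA r p disc (w m)) 0 (fun j => by simpa using hwV j) i
        simpa using this
      constructor
      · intro i; rw [hw m]; exact hZA _ hTwV i
      · intro i
        rw [hv m, hw m]
        have h1 : Tdisc A hA r p disc (v m) i ≤ Tdisc A hA r p disc (w m) i := by
          have := Tdisc_le_add A hA r p disc hdisc0 hp0 hp1 (v m) (w m) 0
            (fun j => by simpa using hvw j) i
          simpa using this
        exact le_trans h1 (hZB _ hTwV i)
  have hwle : ∀ k i, w k i ≤ vstar i := fun k i =>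
    le_vstar_of_mem_V A hA r p disc hdisc0 hdisc1 hp0 hp1 vstar hfix (w k) (key k).1 i
  -- lower bound on v k
  have hvlb : ∀ k j, vstar j ≤ v k j + disc ^ k * C := by
    intro k
    induction k with
    | zero =>
      intro j
      have : vstar j - v 0 j ≤ C := by
        calc vstar j - v 0 j ≤ |vstar j - v 0 j| := le_abs_self _
          _ = ‖(vstar - v 0) j‖ := by simp [Real.norm_eq_abs]
          _ ≤ ‖vstar - v 0‖ := norm_le_pi_norm _ j
      simp; linarith
    | succ m ih =>
      intro j
      have h := Tdisc_le_add A hA r p disc hdisc0 hp0 hp1 vstar (v m) (disc ^ m * C) ih j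
      rw [hv m]
      have hfj : Tdisc A hA r p disc vstar j = vstar j := by rw [hfix]
      rw [hfj] at h
      calc vstar j ≤ Tdisc A hA r p disc (v m) j + disc * (disc ^ m * C) := h
        _ = Tdisc A hA r p disc (v m) j + disc ^ (m + 1) * C := by ring
  have hmain : ∀ k, ‖vstar - w k‖ ≤ disc ^ k * C := by
    intro k
    have hnn : 0 ≤ disc ^ k * C := mul_nonneg (pow_nonneg hdisc0 k) hC0
    rw [pi_norm_le_iff_of_nonneg hnn]
    intro i
    have h1 : 0 ≤ vstar i - w k i := by linarith [hwle k i]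
    have h2 : vstar i - w k i ≤ disc ^ k * C := by
      have := (key k).2 i
      have := hvlb k i
      linarith
    simp only [Pi.sub_apply, Real.norm_eq_abs]
    rw [abs_of_nonneg h1]
    exact h2
  refine ⟨hmain, ?_⟩
  rw [tendsto_iff_norm_sub_tendsto_zero]
  have htend : Filter.Tendsto (fun k => disc ^ k * C) Filter.atTop (nhds 0) := by
    simpa using (tendsto_pow_atTop_nhds_zero_of_lt_one hdisc0 hdisc1).mul_const C
  apply squeeze_zero (fun k => norm_nonneg _) _ htend
  intro k
  rw [norm_sub_rev]
  exact hmain k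
end

section
/- (Domination by the fixed point of the SSP operator and norm improvement, Lemma on convergence, parts (ii)–(iii)) Assume there exist weights ξ(i) > 0 for each state i and a constant ρ with 0 ≤ ρ < 1 such that Σ_j p(i,a,j)·ξ(j) ≤ ρ·ξ(i) for all i and all a ∈ A(i) (so that T_λ is a contraction in the ξ-weighted max norm). Suppose h_λ ∈ ℝ^n satisfies T_λ h_λ = h_λ. Let Z : ℝ^n → ℝ^n satisfy (A) Z(H_λ) ⊆ H_λ and (B) Z h ≥ h componentwise for all h ∈ H_λ. Then for every h ∈ H_λ: h ≤ Z h ≤ h_λ componentwise, and consequently max_i |h_λ(i) − (Z h)(i)|/ξ(i) ≤ max_i |h_λ(i) − h(i)|/ξ(i). -/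
/-- Domination by the fixed point of the SSP operator and improvement in the
ξ-weighted max norm (Lemma on convergence, parts (ii)–(iii)): assume weights
`ξ(i) > 0` and `0 ≤ ρ < 1` with `Σ_j p(i,a,j)·ξ(j) ≤ ρ·ξ(i)` (so `T_λ` is a
contraction in the ξ-weighted max norm), `T_λ h_λ = h_λ`, and `Z` satisfies the
Acceleration Conditions (A) and (B) on `H_λ`. Then every `h ∈ H_λ` satisfies
`h ≤ Z h ≤ h_λ` componentwise, and
`max_i |h_λ(i) − (Z h)(i)|/ξ(i) ≤ max_i |h_λ(i) − h(i)|/ξ(i)`. -/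
theorem accelerated_SSP_domination_and_norm (n : ℕ) (hn : 1 ≤ n)
    (A : Fin n → Finset ℕ) (hA : ∀ i, (A i).Nonempty)
    (r : Fin n → ℕ → ℝ) (p : Fin n → ℕ → Fin n → ℝ)
    (hp0 : ∀ i, ∀ a ∈ A i, ∀ j, 0 ≤ p i a j)
    (hp1 : ∀ i, ∀ a ∈ A i, ∑ j, p i a j ≤ 1)
    (lam : ℝ)
    (ξ : Fin n → ℝ) (hξ : ∀ i, 0 < ξ i)
    (ρ : ℝ) (hρ0 : 0 ≤ ρ) (hρ1 : ρ < 1)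
    (hcontr : ∀ i, ∀ a ∈ A i, ∑ j, p i a j * ξ j ≤ ρ * ξ i)
    (hlamfix : Fin n → ℝ) (hfix : Tlam A hA r p lam hlamfix = hlamfix)
    (Z : (Fin n → ℝ) → (Fin n → ℝ))
    (hZA : ∀ h : Fin n → ℝ, (∀ i, h i ≤ Tlam A hA r p lam h i) →
      ∀ i, Z h i ≤ Tlam A hA r p lam (Z h) i)
    (hZB : ∀ h : Fin n → ℝ, (∀ i, h i ≤ Tlam A hA r p lam h i) →
      ∀ i, h i ≤ Z h i)
    (h : Fin n → ℝ) (hh : ∀ i, h i ≤ Tlam A hA r p lam h i) :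
    (∀ i, h i ≤ Z h i ∧ Z h i ≤ hlamfix i) ∧
      (Finset.univ.sup' ⟨⟨0, hn⟩, Finset.mem_univ _⟩
          (fun i => |hlamfix i - Z h i| / ξ i)
        ≤ Finset.univ.sup' ⟨⟨0, hn⟩, Finset.mem_univ _⟩
          (fun i => |hlamfix i - h i| / ξ i)) := by

  -- Key: any g with g ≤ T g satisfies g ≤ hlamfix.
  have key : ∀ g : Fin n → ℝ, (∀ i, g i ≤ Tlam A hA r p lam g i) →
      ∀ i, g i ≤ hlamfix i := by
    intro g hg
    have hne : (Finset.univ : Finset (Fin n)).Nonempty := ⟨⟨0, hn⟩, Finset.mem_univ _⟩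
    set M := Finset.univ.sup' hne (fun i => (g i - hlamfix i) / ξ i) with hM
    have hMle : ∀ i, g i - hlamfix i ≤ M * ξ i := by
      intro i
      have := Finset.le_sup' (fun i => (g i - hlamfix i) / ξ i) (Finset.mem_univ i)
      rw [div_le_iff₀ (hξ i)] at this
      linarith [this]
    obtain ⟨i₀, -, hi₀⟩ := Finset.exists_mem_eq_sup' hne (fun i => (g i - hlamfix i) / ξ i)
    by_cases hM0 : M ≤ 0
    · intro i
      have := hMle i
      nlinarith [(hξ i).le, mul_nonneg (neg_nonneg.mpr hM0) (hξ i).le]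
    · exfalso
      push_neg at hM0
      -- minimizer of T hlamfix at i₀
      obtain ⟨a, ha, haeq⟩ := Finset.exists_mem_eq_inf' (hA i₀)
        (fun a => r i₀ a - lam + ∑ j, p i₀ a j * hlamfix j)
      have hTg : Tlam A hA r p lam g i₀ ≤ r i₀ a - lam + ∑ j, p i₀ a j * g j :=
        Finset.inf'_le _ ha
      have hTh : hlamfix i₀ = r i₀ a - lam + ∑ j, p i₀ a j * hlamfix j := by
        conv_lhs => rw [← hfix]
        simpa [Tlam] using haeq
      have hsum : ∑ j, p i₀ a j * g j - ∑ j, p i₀ a j * hlamfix j ≤ M * (ρ * ξ i₀) := by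
        rw [← Finset.sum_sub_distrib]
        calc ∑ j, (p i₀ a j * g j - p i₀ a j * hlamfix j)
            ≤ ∑ j, p i₀ a j * (M * ξ j) := by
              apply Finset.sum_le_sum
              intro j _
              rw [← mul_sub]
              exact mul_le_mul_of_nonneg_left (hMle j) (hp0 i₀ a ha j)
          _ = M * ∑ j, p i₀ a j * ξ j := by
              rw [Finset.mul_sum]; congr 1; ext j; ring
          _ ≤ M * (ρ * ξ i₀) := mul_le_mul_of_nonneg_left (hcontr i₀ a ha) hM0.le
      have hMi₀ : M * ξ i₀ ≤ g i₀ - hlamfix i₀ := by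
        rw [hM, hi₀, div_mul_cancel₀ _ (hξ i₀).ne']
      have hgT := hg i₀
      nlinarith [hξ i₀, mul_pos hM0 (hξ i₀)]
  have hB := hZB h hh
  have hZle : ∀ i, Z h i ≤ hlamfix i := key (Z h) (hZA h hh)
  refine ⟨fun i => ⟨hB i, hZle i⟩, ?_⟩
  apply Finset.sup'_mono_fun
  intro i _
  have hhle : h i ≤ hlamfix i := le_trans (hB i) (hZle i)
  rw [abs_of_nonneg (by linarith [hZle i]), abs_of_nonneg (by linarith)]
  gcongr
  · exact (hξ i).le
  · linarith [hB i]
end
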